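/- Let e ≥ 5 and let G be the dihedral group of order 2^{e+1}. Then the minimum genus of G equals 2^{e−1}; that is, 2^{e−1} ∈ sp(G) and every g ∈ sp(G) satisfies g ≥ 2^{e−1}. -/

import Mathlib

open DihedralGroup
open scoped commutatorElement

def psiFun (n : ℕ) (hn : (2:ℕ) ∣ n) : DihedralGroup n → Multiplicative (ZMod 2 × ZMod 2)
  | .r i => Multiplicative.ofAdd (ZMod.castHom hn (ZMod 2) i, 0)
  | .sr i => Multiplicative.ofAdd (ZMod.castHom hn (ZMod 2) i, 1)

def psi (n : ℕ) (hn : (2:ℕ) ∣ n) : DihedralGroup n →* Multiplicative (ZMod 2 × ZMod 2) where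
  toFun := psiFun n hn
  map_one' := by simp [psiFun, one_def, -r_zero]
  map_mul' := by
    have aux : ∀ u v : ZMod 2, u - v = v + u := by decide
    rintro (i|i) (j|j) <;>
      simp [psiFun, r_mul_r, r_mul_sr, sr_mul_r, sr_mul_sr, map_add, map_sub,
        ← ofAdd_add, Prod.mk_add_mk, aux, show (1+1 : ZMod 2) = 0 from by decide]

@[simp] lemma psi_r (n : ℕ) (hn : (2:ℕ) ∣ n) (i : ZMod n) :
    psi n hn (r i) = Multiplicative.ofAdd (ZMod.castHom hn (ZMod 2) i, 0) := rfl

@[simp] lemma psi_sr (n : ℕ) (hn : (2:ℕ) ∣ n) (i : ZMod n) :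
    psi n hn (sr i) = Multiplicative.ofAdd (ZMod.castHom hn (ZMod 2) i, 1) := rfl

lemma psi_not_zpowers (n : ℕ) (hn : (2:ℕ) ∣ n) (S : Set (DihedralGroup n))
    (hS : Subgroup.closure S = ⊤) (z : Multiplicative (ZMod 2 × ZMod 2))
    (h : ∀ x ∈ S, psi n hn x ∈ Subgroup.zpowers z) : False := by
  have hall : ∀ x : DihedralGroup n, psi n hn x ∈ Subgroup.zpowers z := by
    have hle : Subgroup.closure S ≤ (Subgroup.zpowers z).comap (psi n hn) :=
      (Subgroup.closure_le _).2 h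
    rw [hS] at hle
    exact fun x => hle (Subgroup.mem_top x)
  have hz2 : z ^ (2:ℤ) = 1 := by
    have hh : ∀ w : Multiplicative (ZMod 2 × ZMod 2), w ^ (2:ℕ) = 1 := by decide
    rw [show (2:ℤ) = ((2:ℕ):ℤ) from rfl, zpow_natCast]
    exact hh z
  have mem12 : ∀ w : Multiplicative (ZMod 2 × ZMod 2),
      w ∈ Subgroup.zpowers z → w = 1 ∨ w = z := by
    rintro w ⟨k, hkw⟩
    have hkw' : z ^ k = w := hkw
    rw [← hkw']
    have hk : z ^ k = z ^ (k % 2) := by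
      conv_lhs => rw [← Int.emod_add_mul_ediv k 2]
      rw [zpow_add, zpow_mul, hz2, one_zpow, mul_one]
    rcases Int.emod_two_eq_zero_or_one k with h2 | h2 <;> rw [hk, h2]
    · exact Or.inl (zpow_zero z)
    · exact Or.inr (zpow_one z)
  have h1 := mem12 _ (hall (r 1))
  have h2 := mem12 _ (hall (sr 0))
  simp only [psi_r, psi_sr, map_one, map_zero] at h1 h2
  rcases h1 with h1 | h1 <;> rcases h2 with h2 | h2
  · exact absurd h1 (by decide)
  · exact absurd h1 (by decide)
  · exact absurd h2 (by decide)
  · rw [← h2] at h1; exact absurd h1 (by decide)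

lemma no_all_r (n : ℕ) (hn : (2:ℕ) ∣ n) (S : Set (DihedralGroup n))
    (hS : Subgroup.closure S = ⊤)
    (hall : ∀ x ∈ S, ∃ i, x = DihedralGroup.r i) : False := by
  apply psi_not_zpowers n hn S hS (Multiplicative.ofAdd (1, 0))
  intro x hx
  obtain ⟨i, rfl⟩ := hall x hx
  rw [psi_r]
  have hZ : ∀ y : ZMod 2, y = 0 ∨ y = 1 := by decide
  rcases hZ (ZMod.castHom hn (ZMod 2) i) with hy | hy <;> rw [hy]
  · exact (show Multiplicative.ofAdd ((0:ZMod 2),(0:ZMod 2)) = 1 from rfl) ▸ one_mem _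
  · exact Subgroup.mem_zpowers _

lemma no_two_sr (n : ℕ) (hn : (2:ℕ) ∣ n) (S : Set (DihedralGroup n))
    (hS : Subgroup.closure S = ⊤) (p q : ZMod n)
    (hall : ∀ x ∈ S, x = DihedralGroup.sr p ∨ x = DihedralGroup.sr q ∨
      ∃ i, x = DihedralGroup.r i ∧ ZMod.castHom hn (ZMod 2) i = 0)
    (hpq : ZMod.castHom hn (ZMod 2) p = ZMod.castHom hn (ZMod 2) q) : False := by
  apply psi_not_zpowers n hn S hS (Multiplicative.ofAdd (ZMod.castHom hn (ZMod 2) p, 1))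
  intro x hx
  rcases hall x hx with rfl | rfl | ⟨i, rfl, hi⟩
  · rw [psi_sr]; exact Subgroup.mem_zpowers _
  · rw [psi_sr, ← hpq]; exact Subgroup.mem_zpowers _
  · rw [psi_r, hi]
    exact (show Multiplicative.ofAdd ((0:ZMod 2),(0:ZMod 2)) = 1 from rfl) ▸ one_mem _

lemma contra_of_mu (e : ℕ) (gq mu : ℚ) (h2e : (0:ℚ) < 2^e) (hg : 2 ≤ gq)
    (hRH : 2*(gq-1) = 2*2^e*mu) (hmu : mu ≤ 0) : False := by
  have hK : (0:ℚ) ≤ 2*2^e := by positivity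
  have : 2*2^e*mu ≤ 0 := mul_nonpos_iff.mpr (Or.inl ⟨hK, hmu⟩)
  linarith

lemma final_of_mu (e : ℕ) (gq mu : ℚ) (h2e : (0:ℚ) < 2^e) (hpow : (2:ℚ)^(e-1)*2 = 2^e)
    (hRH : 2*(gq - 1) = 2*2^e * mu) (hmu : 1/2 - 1/2^e ≤ mu) : (2:ℚ)^(e-1) ≤ gq := by
  have h1 : 2*2^e*(1/2 - 1/2^e) ≤ 2*2^e*mu :=
    mul_le_mul_of_nonneg_left hmu (by positivity)
  have h2 : (2:ℚ)*2^e*(1/2-1/2^e) = 2^e - 2 := by field_simp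
  linarith

lemma range_fin3 {α : Type*} (c : Fin 3 → α) : Set.range c = {c 0, c 1, c 2} := by
  ext x
  constructor
  · rintro ⟨j, rfl⟩; fin_cases j <;> simp
  · rintro (rfl | rfl | rfl) <;> exact ⟨_, rfl⟩

lemma range_fin4 {α : Type*} (c : Fin 4 → α) : Set.range c = {c 0, c 1, c 2, c 3} := by
  ext x
  constructor
  · rintro ⟨j, rfl⟩; fin_cases j <;> simp
  · rintro (rfl | rfl | rfl | rfl) <;> exact ⟨_, rfl⟩


lemma natCast_zmod_two_of_odd (a : ℕ) (h : a % 2 = 1) : ((a:ℕ) : ZMod 2) = 1 := by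
  obtain ⟨k, hk⟩ : ∃ k, a = 2*k+1 := ⟨a/2, by omega⟩
  subst hk; push_cast; rw [show (2:ZMod 2) = 0 by decide]; ring

lemma castHom_eq_val (n : ℕ) [NeZero n] (hn : (2:ℕ) ∣ n) (m : ZMod n) :
    ZMod.castHom hn (ZMod 2) m = ((m.val : ℕ) : ZMod 2) := by
  conv_lhs => rw [← ZMod.natCast_rightInverse m]
  rw [map_natCast]

lemma orderOf_r_of_odd (e : ℕ) (hn : (2:ℕ) ∣ 2^e) (m : ZMod (2^e))
    (hm : ZMod.castHom hn (ZMod 2) m = 1) : orderOf (DihedralGroup.r m) = 2^e := by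
  haveI : NeZero (2^e) := ⟨(Nat.two_pow_pos e).ne'⟩
  rw [orderOf_r]
  rw [castHom_eq_val] at hm
  have hodd : m.val % 2 = 1 := by
    rcases Nat.even_or_odd m.val with hev | hod
    · exfalso
      obtain ⟨t, ht⟩ := hev
      rw [ht] at hm
      push_cast at hm
      rw [show ∀ x : ZMod 2, x + x = 0 from by decide] at hm
      exact absurd hm.symm (by decide)
    · exact Nat.odd_iff.mp hod
  have hcop : Nat.Coprime (2^e) m.val := by
    apply Nat.Coprime.pow_left
    exact Nat.coprime_two_left.mpr (Nat.odd_iff.mpr hodd)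
  rw [hcop.gcd_eq_one, Nat.div_one]

lemma orderOf_r_half (e : ℕ) (he : 1 ≤ e) :
    orderOf (DihedralGroup.r (((2^(e-1) : ℕ)) : ZMod (2^e))) = 2 := by
  haveI : NeZero (2^e) := ⟨(Nat.two_pow_pos e).ne'⟩
  rw [orderOf_r, ZMod.val_natCast]
  have hlt : 2^(e-1) < 2^e := Nat.pow_lt_pow_right (by norm_num) (by omega)
  rw [Nat.mod_eq_of_lt hlt]
  rw [Nat.gcd_eq_right (pow_dvd_pow 2 (by omega))]
  rw [Nat.pow_div (by omega) (by norm_num)]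
  rw [show e - (e-1) = 1 from by omega, pow_one]

lemma gen_top (e : ℕ) (S : Set (DihedralGroup (2^e)))
    (h0 : DihedralGroup.sr 0 ∈ S) (h1 : DihedralGroup.sr 1 ∈ S) :
    Subgroup.closure S = ⊤ := by
  haveI : NeZero (2^e) := ⟨(Nat.two_pow_pos e).ne'⟩
  rw [eq_top_iff]
  set H := Subgroup.closure S with hH
  have hm0 : DihedralGroup.sr 0 ∈ H := Subgroup.subset_closure h0
  have hm1 : DihedralGroup.sr 1 ∈ H := Subgroup.subset_closure h1
  have hr1 : (DihedralGroup.r 1 : DihedralGroup (2^e)) ∈ H := by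
    have := mul_mem hm0 hm1
    rwa [sr_mul_sr, sub_zero] at this
  have hri : ∀ i : ZMod (2^e), DihedralGroup.r i ∈ H := by
    intro i
    have hpow : (DihedralGroup.r 1 : DihedralGroup (2^e)) ^ i.val = DihedralGroup.r i := by
      rw [r_one_pow]
      congr 1
      exact ZMod.natCast_rightInverse i
    exact hpow ▸ pow_mem hr1 _
  have hsi : ∀ i : ZMod (2^e), DihedralGroup.sr i ∈ H := by
    intro i
    have := mul_mem hm0 (hri i)
    rwa [sr_mul_r, zero_add] at this
  rintro (i | i) -
  · exact hri i
  · exact hsi i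

/-- Genus spectrum membership, as in Riemann's Existence Theorem. -/
def IsGenus (G : Type*) [Group G] (g : ℕ) : Prop :=
  2 ≤ g ∧ ∃ (h r : ℕ) (n : Fin r → ℕ) (a b : Fin h → G) (c : Fin r → G),
    (∀ j, 2 ≤ n j) ∧ (∀ j, orderOf (c j) = n j) ∧
    Subgroup.closure (Set.range a ∪ Set.range b ∪ Set.range c) = ⊤ ∧
    (List.ofFn (fun i => ⁅a i, b i⁆)).prod * (List.ofFn c).prod = 1 ∧
    2 * ((g : ℚ) - 1) =
      (Nat.card G : ℚ) * (2 * ((h : ℚ) - 1) + ∑ j, (1 - 1 / (n j : ℚ)))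

set_option maxHeartbeats 1600000 in
lemma exists_part (e : ℕ) (he : 5 ≤ e) : IsGenus (DihedralGroup (2^e)) (2^(e-1)) := by
  haveI : NeZero (2^e) := ⟨(Nat.two_pow_pos e).ne'⟩
  constructor
  · calc 2 = 2^1 := by norm_num
    _ ≤ 2^(e-1) := Nat.pow_le_pow_right (by norm_num) (by omega)
  refine ⟨0, 4, ![2, 2, 2, 2^e], Fin.elim0, Fin.elim0,
    ![DihedralGroup.sr 0, DihedralGroup.sr 1,
      DihedralGroup.r ((2^(e-1) : ℕ) : ZMod (2^e)),
      DihedralGroup.r ((2^(e-1) - 1 : ℕ) : ZMod (2^e))], ?_, ?_, ?_, ?_, ?_⟩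
  · intro j; fin_cases j <;> simp
    exact Nat.one_lt_two_pow_iff.mpr (by omega)
  · intro j; fin_cases j
    · simpa using orderOf_sr (0 : ZMod (2^e))
    · simpa using orderOf_sr (1 : ZMod (2^e))
    · simpa using orderOf_r_half e (by omega)
    · have : orderOf (DihedralGroup.r ((2^(e-1) - 1 : ℕ) : ZMod (2^e))) = 2^e := by
        apply orderOf_r_of_odd e (dvd_pow_self 2 (by omega))
        rw [map_natCast]
        apply natCast_zmod_two_of_odd
        have h1 : 2 ≤ 2^(e-1) := by
          calc 2 = 2^1 := by norm_num
          _ ≤ 2^(e-1) := Nat.pow_le_pow_right (by norm_num) (by omega)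
        have h2 : 2 ∣ 2^(e-1) := dvd_pow_self 2 (by omega)
        omega
      simpa using this
  · apply gen_top <;> simp
  · simp only [List.ofFn_zero, List.prod_nil, one_mul]
    have hofn : List.ofFn ![DihedralGroup.sr (0 : ZMod (2^e)), DihedralGroup.sr 1,
        DihedralGroup.r ((2^(e-1) : ℕ) : ZMod (2^e)),
        DihedralGroup.r ((2^(e-1) - 1 : ℕ) : ZMod (2^e))] =
        [DihedralGroup.sr 0, DihedralGroup.sr 1,
          DihedralGroup.r ((2^(e-1) : ℕ) : ZMod (2^e)),
          DihedralGroup.r ((2^(e-1) - 1 : ℕ) : ZMod (2^e))] := by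
      simp [List.ofFn_succ]
    rw [hofn]
    simp only [List.prod_cons, List.prod_nil, mul_one]
    rw [r_mul_r, sr_mul_r, sr_mul_sr]
    rw [one_def]
    congr 1
    have hsum : ((1 : ℕ) + (2^(e-1) + (2^(e-1) - 1)) : ℕ) = 2^e := by
      have h2 : 2^(e-1) + 2^(e-1) = 2^e := by
        rw [← two_mul, ← pow_succ']
        congr 1; omega
      have h1 : 1 ≤ 2^(e-1) := Nat.one_le_two_pow
      omega
    rw [sub_zero]
    calc (1 : ZMod (2^e)) + (((2^(e-1) : ℕ) : ZMod (2^e)) + ((2^(e-1) - 1 : ℕ) : ZMod (2^e)))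
        = (((1 + (2^(e-1) + (2^(e-1) - 1)) : ℕ) : ZMod (2^e))) := by push_cast; ring
      _ = ((2^e : ℕ) : ZMod (2^e)) := by rw [hsum]
      _ = 0 := ZMod.natCast_self _
  · rw [DihedralGroup.nat_card]
    rw [Fin.sum_univ_four]
    have h2e : ((2:ℚ)^e) ≠ 0 := by positivity
    have hpow : (2:ℚ)^(e-1) * 2 = (2:ℚ)^e := by
      rw [← pow_succ]; congr 1; omega
    simp only [Matrix.cons_val_zero, Matrix.cons_val_one, Matrix.head_cons]
    push_cast
    field_simp
    nlinarith [hpow]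

set_option maxHeartbeats 3200000 in
lemma min_part (e : ℕ) (he : 5 ≤ e) (g : ℕ)
    (hg : IsGenus (DihedralGroup (2^e)) g) : 2^(e-1) ≤ g := by
  haveI : NeZero (2^e) := ⟨(Nat.two_pow_pos e).ne'⟩
  have hdvd : (2:ℕ) ∣ 2^e := dvd_pow_self 2 (by omega)
  have hZtwo : ∀ y : ZMod 2, y = 0 ∨ y = 1 := by decide
  obtain ⟨hg2, h, r, n, a, b, c, hn, hord, hclos, hprod, hRH⟩ := hg
  rw [DihedralGroup.nat_card] at hRH
  push_cast at hRH
  have hg2q : (2:ℚ) ≤ g := by exact_mod_cast hg2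
  have h2e : (0:ℚ) < 2^e := by positivity
  have hpow : (2:ℚ)^(e-1) * 2 = (2:ℚ)^e := by rw [← pow_succ]; congr 1; omega
  have hterm : ∀ j : Fin r, (1:ℚ)/2 ≤ 1 - 1/(n j : ℚ) ∧ (1 - 1/(n j:ℚ)) ≤ 1 ∧ 0 < 1/(n j:ℚ) := by
    intro j
    have h2 : (2:ℚ) ≤ (n j : ℚ) := by exact_mod_cast hn j
    have hpos : (0:ℚ) < (n j:ℚ) := by linarith
    have h1 : 1/(n j : ℚ) ≤ 1/2 := by
      apply one_div_le_one_div_of_le <;> linarith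
    have h0 : (0:ℚ) < 1/(n j:ℚ) := by positivity
    exact ⟨by linarith, by linarith, h0⟩
  suffices hq : (2:ℚ)^(e-1) ≤ (g:ℚ) by
    have : ((2^(e-1):ℕ):ℚ) ≤ (g:ℚ) := by push_cast; exact hq
    exact_mod_cast this
  have hSlb : (r:ℚ)/2 ≤ ∑ j : Fin r, (1 - 1/(n j:ℚ)) := by
    calc (r:ℚ)/2 = ∑ _j : Fin r, (1:ℚ)/2 := by simp [Finset.sum_const]; ring
    _ ≤ _ := Finset.sum_le_sum fun j _ => (hterm j).1
  have hSub : (∑ j : Fin r, (1 - 1/(n j:ℚ))) ≤ r := by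
    calc (∑ j : Fin r, (1 - 1/(n j:ℚ))) ≤ ∑ _j : Fin r, (1:ℚ) :=
      Finset.sum_le_sum fun j _ => (hterm j).2.1
    _ = r := by simp
  rcases Nat.eq_zero_or_pos h with hh0 | hhpos
  case inr =>
    rcases eq_or_lt_of_le (Nat.succ_le_of_lt hhpos) with hh1 | hh2
    · -- h = 1
      have hh1' : h = 1 := hh1.symm
      subst hh1'
      rcases Nat.eq_zero_or_pos r with hr0 | hrpos
      · subst hr0
        exfalso
        have hz : (∑ j : Fin 0, (1 - 1/(n j:ℚ))) = 0 := by simp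
        rw [hz] at hRH
        push_cast at hRH
        nlinarith
      · have hr1 : (1:ℚ) ≤ r := by exact_mod_cast hrpos
        have hkey : (1:ℚ)/2 ≤ 2*((1:ℕ):ℚ) - 2 + ∑ j : Fin r, (1 - 1/(n j:ℚ)) := by
          push_cast; linarith
        nlinarith [mul_le_mul_of_nonneg_left hkey (le_of_lt (by positivity : (0:ℚ) < 2*2^e))]
    · -- h ≥ 2
      have hh2q : (2:ℚ) ≤ (h:ℚ) := by exact_mod_cast hh2
      have hS0 : (0:ℚ) ≤ ∑ j : Fin r, (1 - 1/(n j:ℚ)) := by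
        refine Finset.sum_nonneg fun j _ => by linarith [(hterm j).1]
      have hkey : (2:ℚ) ≤ 2*((h:ℚ)-1) + ∑ j : Fin r, (1 - 1/(n j:ℚ)) := by linarith
      nlinarith [mul_le_mul_of_nonneg_left hkey (le_of_lt (by positivity : (0:ℚ) < 2*2^e))]
  case inl =>
    subst hh0
    -- clean up closure and product
    have hclos' : Subgroup.closure (Set.range c) = ⊤ := by
      have : Set.range a = ∅ := Set.range_eq_empty a
      have hb : Set.range b = ∅ := Set.range_eq_empty b
      rwa [this, hb, Set.empty_union, Set.empty_union] at hclos
    have hprod' : (List.ofFn c).prod = 1 := by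
      have : (List.ofFn (fun i : Fin 0 => ⁅a i, b i⁆)) = [] := by simp
      rwa [this, List.prod_nil, one_mul] at hprod
    clear hclos hprod
    rcases (by omega : r = 0 ∨ r = 1 ∨ r = 2 ∨ r = 3 ∨ r = 4 ∨ 5 ≤ r) with hr|hr|hr|hr|hr|hr5 <;>
      [subst hr; subst hr; subst hr; subst hr; subst hr; skip]
    · -- r = 0
      exfalso; simp at hRH; nlinarith
    · -- r = 1
      exfalso
      nlinarith [mul_le_mul_of_nonneg_left (show 2*((0:ℕ):ℚ) - 2 + ∑ j, (1 - 1/(n j:ℚ)) ≤ -1 by push_cast at hSub ⊢; linarith) (le_of_lt (by positivity : (0:ℚ) < 2*2^e))]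
    · -- r = 2
      exfalso
      nlinarith [mul_le_mul_of_nonneg_left (show 2*((0:ℕ):ℚ) - 2 + ∑ j, (1 - 1/(n j:ℚ)) ≤ 0 by push_cast at hSub ⊢; linarith) (le_of_lt (by positivity : (0:ℚ) < 2*2^e))]
    · -- r = 3
      rw [Fin.sum_univ_three] at hRH
      simp only [List.ofFn_succ, List.ofFn_zero, List.prod_cons, List.prod_nil, mul_one,
        Fin.succ_zero_eq_one, Fin.succ_one_eq_two] at hprod'
      rw [range_fin3] at hclos'
      rcases hc0 : c 0 with m0 | m0 <;> rcases hc1 : c 1 with m1 | m1 <;>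
        rcases hc2 : c 2 with m2 | m2 <;> rw [hc0, hc1, hc2] at hprod' hclos'
      · -- rrr
        exfalso
        refine no_all_r (2^e) hdvd _ hclos' ?_
        rintro x (rfl | rfl | rfl) <;> exact ⟨_, rfl⟩
      · -- rrs
        exfalso; simp [r_mul_r, r_mul_sr, sr_mul_r, sr_mul_sr, one_def, -r_zero] at hprod'
      · -- rsr
        exfalso; simp [r_mul_r, r_mul_sr, sr_mul_r, sr_mul_sr, one_def, -r_zero] at hprod'
      · -- two sr at 1,2
        exfalso
        have hni : n 1 = 2 := by rw [← hord 1, hc1]; exact orderOf_sr _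
        have hnj : n 2 = 2 := by rw [← hord 2, hc2]; exact orderOf_sr _
        rw [hni, hnj] at hRH
        refine contra_of_mu e (g:ℚ) _ h2e hg2q hRH ?_
        have h1 := (hterm 0).2.1
        push_cast
        linarith
      · -- srr
        exfalso; simp [r_mul_r, r_mul_sr, sr_mul_r, sr_mul_sr, one_def, -r_zero] at hprod'
      · -- two sr at 0,2
        exfalso
        have hni : n 0 = 2 := by rw [← hord 0, hc0]; exact orderOf_sr _
        have hnj : n 2 = 2 := by rw [← hord 2, hc2]; exact orderOf_sr _
        rw [hni, hnj] at hRH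
        refine contra_of_mu e (g:ℚ) _ h2e hg2q hRH ?_
        have h1 := (hterm 1).2.1
        push_cast
        linarith
      · -- two sr at 0,1
        exfalso
        have hni : n 0 = 2 := by rw [← hord 0, hc0]; exact orderOf_sr _
        have hnj : n 1 = 2 := by rw [← hord 1, hc1]; exact orderOf_sr _
        rw [hni, hnj] at hRH
        refine contra_of_mu e (g:ℚ) _ h2e hg2q hRH ?_
        have h1 := (hterm 2).2.1
        push_cast
        linarith
      · -- sss
        exfalso; simp [r_mul_r, r_mul_sr, sr_mul_r, sr_mul_sr, one_def, -r_zero] at hprod'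
    · -- r = 4
      rw [Fin.sum_univ_four] at hRH
      simp only [List.ofFn_succ, List.ofFn_zero, List.prod_cons, List.prod_nil, mul_one,
        Fin.succ_zero_eq_one, Fin.succ_one_eq_two,
        show (Fin.succ 2 : Fin 4) = 3 from rfl] at hprod'
      rw [range_fin4] at hclos'
      rcases hc0 : c 0 with m0 | m0 <;> rcases hc1 : c 1 with m1 | m1 <;>
        rcases hc2 : c 2 with m2 | m2 <;> rcases hc3 : c 3 with m3 | m3 <;>
        rw [hc0, hc1, hc2, hc3] at hprod' hclos'
      · -- rrrr
        exfalso
        refine no_all_r (2^e) hdvd _ hclos' ?_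
        rintro x (rfl | rfl | rfl | rfl) <;> exact ⟨_, rfl⟩
      · -- rrrs
        exfalso; simp [r_mul_r, r_mul_sr, sr_mul_r, sr_mul_sr, one_def, -r_zero] at hprod'
      · -- rrsr
        exfalso; simp [r_mul_r, r_mul_sr, sr_mul_r, sr_mul_sr, one_def, -r_zero] at hprod'
      · -- sr at 2,3; rot at 0,1
        have hni : n 2 = 2 := by rw [← hord 2, hc2]; exact orderOf_sr _
        have hnj : n 3 = 2 := by rw [← hord 3, hc3]; exact orderOf_sr _
        rcases hZtwo (ZMod.castHom hdvd (ZMod 2) m0) with hm0 | hm0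
        · rcases hZtwo (ZMod.castHom hdvd (ZMod 2) m1) with hm1 | hm1
          · -- both rotations even: parity contradiction
            exfalso
            simp only [r_mul_r, r_mul_sr, sr_mul_r, sr_mul_sr, one_def,
              DihedralGroup.r.injEq] at hprod'
            have hpq : ZMod.castHom hdvd (ZMod 2) m2 = ZMod.castHom hdvd (ZMod 2) m3 := by
              have h' := congrArg (ZMod.castHom hdvd (ZMod 2)) hprod'
              simp only [map_add, map_sub, map_zero, hm0, hm1] at h'
              generalize ZMod.castHom hdvd (ZMod 2) m2 = u at h' ⊢
              generalize ZMod.castHom hdvd (ZMod 2) m3 = v at h' ⊢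
              revert h'; revert v; revert u; decide
            refine no_two_sr (2^e) hdvd _ hclos' m2 m3 ?_ hpq
            rintro x (rfl | rfl | rfl | rfl)
            · exact Or.inr (Or.inr ⟨_, rfl, hm0⟩)
            · exact Or.inr (Or.inr ⟨_, rfl, hm1⟩)
            · exact Or.inl rfl
            · exact Or.inr (Or.inl rfl)
          · -- rotation 1 odd
            have hnodd : n 1 = 2^e := by
              rw [← hord 1, hc1]; exact orderOf_r_of_odd e hdvd _ hm1
            rw [hni, hnj, hnodd] at hRH
            push_cast at hRH
            refine final_of_mu e (g:ℚ) _ h2e hpow hRH ?_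
            have h1 := (hterm 0).1
            have h2 := (hterm 0).2.2
            linarith
        · -- rotation 0 odd
            have hnodd : n 0 = 2^e := by
              rw [← hord 0, hc0]; exact orderOf_r_of_odd e hdvd _ hm0
            rw [hni, hnj, hnodd] at hRH
            push_cast at hRH
            refine final_of_mu e (g:ℚ) _ h2e hpow hRH ?_
            have h1 := (hterm 1).1
            have h2 := (hterm 1).2.2
            linarith
      · -- rsrr
        exfalso; simp [r_mul_r, r_mul_sr, sr_mul_r, sr_mul_sr, one_def, -r_zero] at hprod'
      · -- sr at 1,3; rot at 0,2
        have hni : n 1 = 2 := by rw [← hord 1, hc1]; exact orderOf_sr _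
        have hnj : n 3 = 2 := by rw [← hord 3, hc3]; exact orderOf_sr _
        rcases hZtwo (ZMod.castHom hdvd (ZMod 2) m0) with hm0 | hm0
        · rcases hZtwo (ZMod.castHom hdvd (ZMod 2) m2) with hm2 | hm2
          · -- both rotations even: parity contradiction
            exfalso
            simp only [r_mul_r, r_mul_sr, sr_mul_r, sr_mul_sr, one_def,
              DihedralGroup.r.injEq] at hprod'
            have hpq : ZMod.castHom hdvd (ZMod 2) m1 = ZMod.castHom hdvd (ZMod 2) m3 := by
              have h' := congrArg (ZMod.castHom hdvd (ZMod 2)) hprod'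
              simp only [map_add, map_sub, map_zero, hm0, hm2] at h'
              generalize ZMod.castHom hdvd (ZMod 2) m1 = u at h' ⊢
              generalize ZMod.castHom hdvd (ZMod 2) m3 = v at h' ⊢
              revert h'; revert v; revert u; decide
            refine no_two_sr (2^e) hdvd _ hclos' m1 m3 ?_ hpq
            rintro x (rfl | rfl | rfl | rfl)
            · exact Or.inr (Or.inr ⟨_, rfl, hm0⟩)
            · exact Or.inl rfl
            · exact Or.inr (Or.inr ⟨_, rfl, hm2⟩)
            · exact Or.inr (Or.inl rfl)
          · -- rotation 2 odd
            have hnodd : n 2 = 2^e := by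
              rw [← hord 2, hc2]; exact orderOf_r_of_odd e hdvd _ hm2
            rw [hni, hnj, hnodd] at hRH
            push_cast at hRH
            refine final_of_mu e (g:ℚ) _ h2e hpow hRH ?_
            have h1 := (hterm 0).1
            have h2 := (hterm 0).2.2
            linarith
        · -- rotation 0 odd
            have hnodd : n 0 = 2^e := by
              rw [← hord 0, hc0]; exact orderOf_r_of_odd e hdvd _ hm0
            rw [hni, hnj, hnodd] at hRH
            push_cast at hRH
            refine final_of_mu e (g:ℚ) _ h2e hpow hRH ?_
            have h1 := (hterm 2).1
            have h2 := (hterm 2).2.2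
            linarith
      · -- sr at 1,2; rot at 0,3
        have hni : n 1 = 2 := by rw [← hord 1, hc1]; exact orderOf_sr _
        have hnj : n 2 = 2 := by rw [← hord 2, hc2]; exact orderOf_sr _
        rcases hZtwo (ZMod.castHom hdvd (ZMod 2) m0) with hm0 | hm0
        · rcases hZtwo (ZMod.castHom hdvd (ZMod 2) m3) with hm3 | hm3
          · -- both rotations even: parity contradiction
            exfalso
            simp only [r_mul_r, r_mul_sr, sr_mul_r, sr_mul_sr, one_def,
              DihedralGroup.r.injEq] at hprod'
            have hpq : ZMod.castHom hdvd (ZMod 2) m1 = ZMod.castHom hdvd (ZMod 2) m2 := by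
              have h' := congrArg (ZMod.castHom hdvd (ZMod 2)) hprod'
              simp only [map_add, map_sub, map_zero, hm0, hm3] at h'
              generalize ZMod.castHom hdvd (ZMod 2) m1 = u at h' ⊢
              generalize ZMod.castHom hdvd (ZMod 2) m2 = v at h' ⊢
              revert h'; revert v; revert u; decide
            refine no_two_sr (2^e) hdvd _ hclos' m1 m2 ?_ hpq
            rintro x (rfl | rfl | rfl | rfl)
            · exact Or.inr (Or.inr ⟨_, rfl, hm0⟩)
            · exact Or.inl rfl
            · exact Or.inr (Or.inl rfl)
            · exact Or.inr (Or.inr ⟨_, rfl, hm3⟩)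
          · -- rotation 3 odd
            have hnodd : n 3 = 2^e := by
              rw [← hord 3, hc3]; exact orderOf_r_of_odd e hdvd _ hm3
            rw [hni, hnj, hnodd] at hRH
            push_cast at hRH
            refine final_of_mu e (g:ℚ) _ h2e hpow hRH ?_
            have h1 := (hterm 0).1
            have h2 := (hterm 0).2.2
            linarith
        · -- rotation 0 odd
            have hnodd : n 0 = 2^e := by
              rw [← hord 0, hc0]; exact orderOf_r_of_odd e hdvd _ hm0
            rw [hni, hnj, hnodd] at hRH
            push_cast at hRH
            refine final_of_mu e (g:ℚ) _ h2e hpow hRH ?_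
            have h1 := (hterm 3).1
            have h2 := (hterm 3).2.2
            linarith
      · -- rsss
        exfalso; simp [r_mul_r, r_mul_sr, sr_mul_r, sr_mul_sr, one_def, -r_zero] at hprod'
      · -- srrr
        exfalso; simp [r_mul_r, r_mul_sr, sr_mul_r, sr_mul_sr, one_def, -r_zero] at hprod'
      · -- sr at 0,3; rot at 1,2
        have hni : n 0 = 2 := by rw [← hord 0, hc0]; exact orderOf_sr _
        have hnj : n 3 = 2 := by rw [← hord 3, hc3]; exact orderOf_sr _
        rcases hZtwo (ZMod.castHom hdvd (ZMod 2) m1) with hm1 | hm1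
        · rcases hZtwo (ZMod.castHom hdvd (ZMod 2) m2) with hm2 | hm2
          · -- both rotations even: parity contradiction
            exfalso
            simp only [r_mul_r, r_mul_sr, sr_mul_r, sr_mul_sr, one_def,
              DihedralGroup.r.injEq] at hprod'
            have hpq : ZMod.castHom hdvd (ZMod 2) m0 = ZMod.castHom hdvd (ZMod 2) m3 := by
              have h' := congrArg (ZMod.castHom hdvd (ZMod 2)) hprod'
              simp only [map_add, map_sub, map_zero, hm1, hm2] at h'
              generalize ZMod.castHom hdvd (ZMod 2) m0 = u at h' ⊢
              generalize ZMod.castHom hdvd (ZMod 2) m3 = v at h' ⊢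
              revert h'; revert v; revert u; decide
            refine no_two_sr (2^e) hdvd _ hclos' m0 m3 ?_ hpq
            rintro x (rfl | rfl | rfl | rfl)
            · exact Or.inl rfl
            · exact Or.inr (Or.inr ⟨_, rfl, hm1⟩)
            · exact Or.inr (Or.inr ⟨_, rfl, hm2⟩)
            · exact Or.inr (Or.inl rfl)
          · -- rotation 2 odd
            have hnodd : n 2 = 2^e := by
              rw [← hord 2, hc2]; exact orderOf_r_of_odd e hdvd _ hm2
            rw [hni, hnj, hnodd] at hRH
            push_cast at hRH
            refine final_of_mu e (g:ℚ) _ h2e hpow hRH ?_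
            have h1 := (hterm 1).1
            have h2 := (hterm 1).2.2
            linarith
        · -- rotation 1 odd
            have hnodd : n 1 = 2^e := by
              rw [← hord 1, hc1]; exact orderOf_r_of_odd e hdvd _ hm1
            rw [hni, hnj, hnodd] at hRH
            push_cast at hRH
            refine final_of_mu e (g:ℚ) _ h2e hpow hRH ?_
            have h1 := (hterm 2).1
            have h2 := (hterm 2).2.2
            linarith
      · -- sr at 0,2; rot at 1,3
        have hni : n 0 = 2 := by rw [← hord 0, hc0]; exact orderOf_sr _
        have hnj : n 2 = 2 := by rw [← hord 2, hc2]; exact orderOf_sr _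
        rcases hZtwo (ZMod.castHom hdvd (ZMod 2) m1) with hm1 | hm1
        · rcases hZtwo (ZMod.castHom hdvd (ZMod 2) m3) with hm3 | hm3
          · -- both rotations even: parity contradiction
            exfalso
            simp only [r_mul_r, r_mul_sr, sr_mul_r, sr_mul_sr, one_def,
              DihedralGroup.r.injEq] at hprod'
            have hpq : ZMod.castHom hdvd (ZMod 2) m0 = ZMod.castHom hdvd (ZMod 2) m2 := by
              have h' := congrArg (ZMod.castHom hdvd (ZMod 2)) hprod'
              simp only [map_add, map_sub, map_zero, hm1, hm3] at h'
              generalize ZMod.castHom hdvd (ZMod 2) m0 = u at h' ⊢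
              generalize ZMod.castHom hdvd (ZMod 2) m2 = v at h' ⊢
              revert h'; revert v; revert u; decide
            refine no_two_sr (2^e) hdvd _ hclos' m0 m2 ?_ hpq
            rintro x (rfl | rfl | rfl | rfl)
            · exact Or.inl rfl
            · exact Or.inr (Or.inr ⟨_, rfl, hm1⟩)
            · exact Or.inr (Or.inl rfl)
            · exact Or.inr (Or.inr ⟨_, rfl, hm3⟩)
          · -- rotation 3 odd
            have hnodd : n 3 = 2^e := by
              rw [← hord 3, hc3]; exact orderOf_r_of_odd e hdvd _ hm3
            rw [hni, hnj, hnodd] at hRH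
            push_cast at hRH
            refine final_of_mu e (g:ℚ) _ h2e hpow hRH ?_
            have h1 := (hterm 1).1
            have h2 := (hterm 1).2.2
            linarith
        · -- rotation 1 odd
            have hnodd : n 1 = 2^e := by
              rw [← hord 1, hc1]; exact orderOf_r_of_odd e hdvd _ hm1
            rw [hni, hnj, hnodd] at hRH
            push_cast at hRH
            refine final_of_mu e (g:ℚ) _ h2e hpow hRH ?_
            have h1 := (hterm 3).1
            have h2 := (hterm 3).2.2
            linarith
      · -- srss
        exfalso; simp [r_mul_r, r_mul_sr, sr_mul_r, sr_mul_sr, one_def, -r_zero] at hprod'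
      · -- sr at 0,1; rot at 2,3
        have hni : n 0 = 2 := by rw [← hord 0, hc0]; exact orderOf_sr _
        have hnj : n 1 = 2 := by rw [← hord 1, hc1]; exact orderOf_sr _
        rcases hZtwo (ZMod.castHom hdvd (ZMod 2) m2) with hm2 | hm2
        · rcases hZtwo (ZMod.castHom hdvd (ZMod 2) m3) with hm3 | hm3
          · -- both rotations even: parity contradiction
            exfalso
            simp only [r_mul_r, r_mul_sr, sr_mul_r, sr_mul_sr, one_def,
              DihedralGroup.r.injEq] at hprod'
            have hpq : ZMod.castHom hdvd (ZMod 2) m0 = ZMod.castHom hdvd (ZMod 2) m1 := by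
              have h' := congrArg (ZMod.castHom hdvd (ZMod 2)) hprod'
              simp only [map_add, map_sub, map_zero, hm2, hm3] at h'
              generalize ZMod.castHom hdvd (ZMod 2) m0 = u at h' ⊢
              generalize ZMod.castHom hdvd (ZMod 2) m1 = v at h' ⊢
              revert h'; revert v; revert u; decide
            refine no_two_sr (2^e) hdvd _ hclos' m0 m1 ?_ hpq
            rintro x (rfl | rfl | rfl | rfl)
            · exact Or.inl rfl
            · exact Or.inr (Or.inl rfl)
            · exact Or.inr (Or.inr ⟨_, rfl, hm2⟩)
            · exact Or.inr (Or.inr ⟨_, rfl, hm3⟩)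
          · -- rotation 3 odd
            have hnodd : n 3 = 2^e := by
              rw [← hord 3, hc3]; exact orderOf_r_of_odd e hdvd _ hm3
            rw [hni, hnj, hnodd] at hRH
            push_cast at hRH
            refine final_of_mu e (g:ℚ) _ h2e hpow hRH ?_
            have h1 := (hterm 2).1
            have h2 := (hterm 2).2.2
            linarith
        · -- rotation 2 odd
            have hnodd : n 2 = 2^e := by
              rw [← hord 2, hc2]; exact orderOf_r_of_odd e hdvd _ hm2
            rw [hni, hnj, hnodd] at hRH
            push_cast at hRH
            refine final_of_mu e (g:ℚ) _ h2e hpow hRH ?_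
            have h1 := (hterm 3).1
            have h2 := (hterm 3).2.2
            linarith
      · -- ssrs
        exfalso; simp [r_mul_r, r_mul_sr, sr_mul_r, sr_mul_sr, one_def, -r_zero] at hprod'
      · -- sssr
        exfalso; simp [r_mul_r, r_mul_sr, sr_mul_r, sr_mul_sr, one_def, -r_zero] at hprod'
      · -- ssss
        exfalso
        have h0 : n 0 = 2 := by rw [← hord 0, hc0]; exact orderOf_sr _
        have h1 : n 1 = 2 := by rw [← hord 1, hc1]; exact orderOf_sr _
        have h2 : n 2 = 2 := by rw [← hord 2, hc2]; exact orderOf_sr _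
        have h3 : n 3 = 2 := by rw [← hord 3, hc3]; exact orderOf_sr _
        rw [h0, h1, h2, h3] at hRH
        refine contra_of_mu e (g:ℚ) _ h2e hg2q hRH ?_
        push_cast
        norm_num
    · -- r ≥ 5
      have hrq : (5:ℚ) ≤ (r:ℚ) := by exact_mod_cast hr5
      have hkey : (1:ℚ)/2 ≤ 2*(((0:ℕ):ℚ))-2 + ∑ j, (1 - 1/(n j:ℚ)) := by
        push_cast at hSlb ⊢
        linarith
      nlinarith [mul_le_mul_of_nonneg_left hkey (le_of_lt (by positivity : (0:ℚ) < 2*2^e))]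

/-- The minimum genus of the dihedral group of order `2^(e+1)`, for `e ≥ 5`,
equals `2^(e-1)`. -/
theorem stmt8 (e : ℕ) (he : 5 ≤ e) :
    IsGenus (DihedralGroup (2 ^ e)) (2 ^ (e - 1)) ∧
      ∀ g : ℕ, IsGenus (DihedralGroup (2 ^ e)) g → 2 ^ (e - 1) ≤ g :=
  ⟨exists_part e he, fun g hg => min_part e he g hg⟩
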